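/- Soundness of the multicut reduction: Let G be a simple graph and H a subgraph of G on the same vertex set (every edge of H is an edge of G). Let s be a vertex of G, and let (s_1, t_1), ..., (s_k, t_k) be pairs of vertices. Suppose that for each i there exist m pairwise edge-disjoint walks from s to s_i in G. Let I be a set of edges of G with |I| < m, and suppose that for every i, the vertex t_i is not reachable from s in G \ I. Then for every i, the vertex t_i is not reachable from s_i in H \ I; that is, the edge set I ∩ E(H) is a multicut of H separating every pair (s_i, t_i). -/
import Mathlib


/-- Soundness of the multicut reduction: if `H ≤ G`, for each `i` there are `m` pairwise
edge-disjoint walks from `s` to `src i` in `G`, `I` is a set of edges of `G` with `|I| < m`,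
and no `snk i` is reachable from `s` in `G \ I`, then no `snk i` is reachable from `src i`
in `H \ I`, i.e. `I` is a multicut of `H` for the pairs `(src i, snk i)`. -/
theorem multicut_reduction_sound
    {V : Type*} (G H : SimpleGraph V) (hle : H ≤ G)
    (s : V) (k : ℕ) (src snk : Fin k → V) (m : ℕ)
    (hwalks : ∀ i, ∃ W : Fin m → G.Walk s (src i),
      ∀ a b, a ≠ b → ∀ e, e ∈ (W a).edges → e ∉ (W b).edges)
    (I : Finset (Sym2 V)) (hIE : ↑I ⊆ G.edgeSet) (hcard : I.card < m)
    (hsep : ∀ i, ¬ (G.deleteEdges ↑I).Reachable s (snk i)) :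
    ∀ i, ¬ (H.deleteEdges ↑I).Reachable (src i) (snk i) := by
  intro i h
  obtain ⟨W, hdisj⟩ := hwalks i
  by_cases hall : ∀ a : Fin m, ∃ e ∈ I, e ∈ (W a).edges
  · choose e he hm using hall
    have hinj : Function.Injective e := by
      intro a b hab
      by_contra hne
      exact hdisj a b hne (e a) (hm a) (hab ▸ hm b)
    have := Finset.card_le_card_of_injOn (s := Finset.univ) e (fun a _ => he a) hinj.injOn
    simp [Finset.card_univ] at this
    omega
  · push_neg at hall
    obtain ⟨a, ha⟩ := hall
    have hWa : ∀ e ∈ (W a).edges, e ∈ (G.deleteEdges ↑I).edgeSet := by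
      intro e heW
      rw [SimpleGraph.edgeSet_deleteEdges]
      exact ⟨(W a).edges_subset_edgeSet heW, fun hin => ha e hin heW⟩
    have h1 : (G.deleteEdges ↑I).Reachable s (src i) :=
      ((W a).transfer _ hWa).reachable
    have hmono : H.deleteEdges ↑I ≤ G.deleteEdges ↑I := by
      intro x y hxy
      exact ⟨hle hxy.1, hxy.2⟩
    exact hsep i (h1.trans (h.mono hmono))
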